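/- In U_q(g), for i ≠ j one has Σ_{r=0}^{1-A_ij} (-1)^r [1-A_ij choose r]_i (K_i^{-1} + F_i(q_i - q_i^{-1}))^{1-A_ij-r} K_j^{-1} (K_i^{-1} + F_i(q_i - q_i^{-1}))^{r} = K_i^{A_ij - 1} K_j^{-1} Π_{s=0}^{-A_ij} (1 - q_i^{A_ij + 2s}). -/

import Mathlib

open FreeAlgebra
open scoped TensorProduct

noncomputable section

/-- The field `𝕂(q)` of rational functions in the indeterminate `q` over `𝕂`. -/
abbrev Kq (K : Type) [Field K] : Type := RatFunc K

/-- The indeterminate `q` viewed as an element of `𝕂(q)`. -/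
def qv (K : Type) [Field K] : Kq K := RatFunc.X

/-- `q_i = q^{d_i}`, given the exponent `di = d_i`. -/
def qi (K : Type) [Field K] (di : ℕ) : Kq K := qv K ^ di

/-- The quantum integer `[m]_i = (q_i^m - q_i^{-m})/(q_i - q_i⁻¹)`. -/
def qnum (K : Type) [Field K] (di : ℕ) (m : ℤ) : Kq K :=
  (qi K di ^ m - qi K di ^ (-m)) / (qi K di - (qi K di)⁻¹)

/-- The quantum factorial `[m]_i! = [m]_i [m-1]_i ⋯ [1]_i`, with `[0]_i! = 1`. -/
def qfac (K : Type) [Field K] (di : ℕ) : ℕ → Kq K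
  | 0 => 1
  | m + 1 => qnum K di (m + 1) * qfac K di m

/-- The Gaussian binomial coefficient `[m choose r]_i = [m]_i!/([r]_i![m-r]_i!)`. -/
def qbin (K : Type) [Field K] (di m r : ℕ) : Kq K :=
  qfac K di m / (qfac K di r * qfac K di (m - r))

/-- Chevalley generators `E_i, F_i, K_i, K_i⁻¹` of `U_q(g)`. -/
inductive CGen (n : ℕ) : Type
  | E : Fin n → CGen n
  | F : Fin n → CGen n
  | K : Fin n → CGen n
  | Kinv : Fin n → CGen n

/-- The defining relations (R1)–(R7) of `U_q(g)` in the Chevalley presentation. -/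
inductive CRel (K : Type) [Field K] {n : ℕ} (A : Matrix (Fin n) (Fin n) ℤ) (d : Fin n → ℕ) :
    FreeAlgebra (Kq K) (CGen n) → FreeAlgebra (Kq K) (CGen n) → Prop
  | R1a (i : Fin n) : CRel K A d (ι (Kq K) (CGen.K i) * ι (Kq K) (CGen.Kinv i)) 1
  | R1b (i : Fin n) : CRel K A d (ι (Kq K) (CGen.Kinv i) * ι (Kq K) (CGen.K i)) 1
  | R2 (i j : Fin n) : CRel K A d (ι (Kq K) (CGen.K i) * ι (Kq K) (CGen.K j))
      (ι (Kq K) (CGen.K j) * ι (Kq K) (CGen.K i))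
  | R3 (i j : Fin n) : CRel K A d
      (ι (Kq K) (CGen.K i) * ι (Kq K) (CGen.E j) * ι (Kq K) (CGen.Kinv i))
      (qi K (d i) ^ (A i j) • ι (Kq K) (CGen.E j))
  | R4 (i j : Fin n) : CRel K A d
      (ι (Kq K) (CGen.K i) * ι (Kq K) (CGen.F j) * ι (Kq K) (CGen.Kinv i))
      (qi K (d i) ^ (-(A i j)) • ι (Kq K) (CGen.F j))
  | R5 (i j : Fin n) : CRel K A d
      (ι (Kq K) (CGen.E i) * ι (Kq K) (CGen.F j) - ι (Kq K) (CGen.F j) * ι (Kq K) (CGen.E i))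
      (if i = j then (qi K (d i) - (qi K (d i))⁻¹)⁻¹ •
        (ι (Kq K) (CGen.K i) - ι (Kq K) (CGen.Kinv i)) else 0)
  | R6 (i j : Fin n) (hij : i ≠ j) : CRel K A d
      (∑ r ∈ Finset.range ((1 - A i j).toNat + 1),
        ((-1 : Kq K) ^ r * qbin K (d i) (1 - A i j).toNat r) •
          (ι (Kq K) (CGen.E i) ^ ((1 - A i j).toNat - r) * ι (Kq K) (CGen.E j) *
            ι (Kq K) (CGen.E i) ^ r)) 0
  | R7 (i j : Fin n) (hij : i ≠ j) : CRel K A d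
      (∑ r ∈ Finset.range ((1 - A i j).toNat + 1),
        ((-1 : Kq K) ^ r * qbin K (d i) (1 - A i j).toNat r) •
          (ι (Kq K) (CGen.F i) ^ ((1 - A i j).toNat - r) * ι (Kq K) (CGen.F j) *
            ι (Kq K) (CGen.F i) ^ r)) 0

/-- The quantum group `U_q(g)` presented by generators and relations (R1)–(R7). -/
abbrev Uqg (K : Type) [Field K] {n : ℕ} (A : Matrix (Fin n) (Fin n) ℤ) (d : Fin n → ℕ) :=
  RingQuot (CRel K A d)

variable (K : Type) [Field K] {n : ℕ} (A : Matrix (Fin n) (Fin n) ℤ) (d : Fin n → ℕ)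

def genE (i : Fin n) : Uqg K A d := RingQuot.mkAlgHom (Kq K) (CRel K A d) (ι (Kq K) (CGen.E i))
def genF (i : Fin n) : Uqg K A d := RingQuot.mkAlgHom (Kq K) (CRel K A d) (ι (Kq K) (CGen.F i))
def genK (i : Fin n) : Uqg K A d := RingQuot.mkAlgHom (Kq K) (CRel K A d) (ι (Kq K) (CGen.K i))
def genKinv (i : Fin n) : Uqg K A d :=
  RingQuot.mkAlgHom (Kq K) (CRel K A d) (ι (Kq K) (CGen.Kinv i))

/-- Equitable generators `X_i, X_i⁻¹, Y_i, Z_i`. -/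
inductive EGen (n : ℕ) : Type
  | X : Fin n → EGen n
  | Xinv : Fin n → EGen n
  | Y : Fin n → EGen n
  | Z : Fin n → EGen n

/-- The defining relations (E1)–(E8) of the equitable presentation. -/
inductive ERel (K : Type) [Field K] {n : ℕ} (A : Matrix (Fin n) (Fin n) ℤ) (d : Fin n → ℕ) :
    FreeAlgebra (Kq K) (EGen n) → FreeAlgebra (Kq K) (EGen n) → Prop
  | E1a (i : Fin n) : ERel K A d (ι (Kq K) (EGen.X i) * ι (Kq K) (EGen.Xinv i)) 1
  | E1b (i : Fin n) : ERel K A d (ι (Kq K) (EGen.Xinv i) * ι (Kq K) (EGen.X i)) 1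
  | E2 (i j : Fin n) : ERel K A d (ι (Kq K) (EGen.X i) * ι (Kq K) (EGen.X j))
      (ι (Kq K) (EGen.X j) * ι (Kq K) (EGen.X i))
  | E3 (i j : Fin n) : ERel K A d
      (ι (Kq K) (EGen.Y i) * ι (Kq K) (EGen.X j) -
        qi K (d i) ^ (A i j) • (ι (Kq K) (EGen.X j) * ι (Kq K) (EGen.Y i)))
      ((1 - qi K (d i) ^ (A i j)) • (ι (Kq K) (EGen.Xinv i) * ι (Kq K) (EGen.X j)))
  | E4 (i j : Fin n) : ERel K A d
      (ι (Kq K) (EGen.X i) * ι (Kq K) (EGen.Z j) -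
        qi K (d i) ^ (A i j) • (ι (Kq K) (EGen.Z j) * ι (Kq K) (EGen.X i)))
      ((1 - qi K (d i) ^ (A i j)) • (ι (Kq K) (EGen.X i) * ι (Kq K) (EGen.Xinv j)))
  | E5 (i : Fin n) : ERel K A d
      (ι (Kq K) (EGen.Z i) * ι (Kq K) (EGen.Y i) -
        (qi K (d i) ^ 2) • (ι (Kq K) (EGen.Y i) * ι (Kq K) (EGen.Z i)))
      ((1 - qi K (d i) ^ 2) • 1)
  | E6 (i j : Fin n) (hij : i ≠ j) : ERel K A d
      (ι (Kq K) (EGen.Z i) * ι (Kq K) (EGen.Y j) -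
        qi K (d i) ^ (A i j) • (ι (Kq K) (EGen.Y j) * ι (Kq K) (EGen.Z i)))
      ((1 - qi K (d i) ^ (A i j)) • (ι (Kq K) (EGen.Xinv i) * ι (Kq K) (EGen.Xinv j)))
  | E7 (i j : Fin n) (hij : i ≠ j) : ERel K A d
      (∑ r ∈ Finset.range ((1 - A i j).toNat + 1),
        ((-1 : Kq K) ^ r * qbin K (d i) (1 - A i j).toNat r) •
          (ι (Kq K) (EGen.Y i) ^ ((1 - A i j).toNat - r) * ι (Kq K) (EGen.Y j) *
            ι (Kq K) (EGen.Y i) ^ r))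
      ((∏ s ∈ Finset.range ((-(A i j)).toNat + 1), (1 - qi K (d i) ^ (A i j + 2 * (s : ℤ)))) •
        (ι (Kq K) (EGen.Xinv i) ^ (1 - A i j).toNat * ι (Kq K) (EGen.Xinv j)))
  | E8 (i j : Fin n) (hij : i ≠ j) : ERel K A d
      (∑ r ∈ Finset.range ((1 - A i j).toNat + 1),
        ((-1 : Kq K) ^ r * qbin K (d i) (1 - A i j).toNat r) •
          (ι (Kq K) (EGen.Z i) ^ ((1 - A i j).toNat - r) * ι (Kq K) (EGen.Z j) *
            ι (Kq K) (EGen.Z i) ^ r))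
      ((∏ s ∈ Finset.range ((-(A i j)).toNat + 1), (1 - qi K (d i) ^ (A i j + 2 * (s : ℤ)))) •
        (ι (Kq K) (EGen.Xinv i) ^ (1 - A i j).toNat * ι (Kq K) (EGen.Xinv j)))

/-- The equitable algebra `U` presented by generators and relations (E1)–(E8). -/
abbrev Ueqg (K : Type) [Field K] {n : ℕ} (A : Matrix (Fin n) (Fin n) ℤ) (d : Fin n → ℕ) :=
  RingQuot (ERel K A d)

def genX (i : Fin n) : Ueqg K A d := RingQuot.mkAlgHom (Kq K) (ERel K A d) (ι (Kq K) (EGen.X i))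
def genXinv (i : Fin n) : Ueqg K A d :=
  RingQuot.mkAlgHom (Kq K) (ERel K A d) (ι (Kq K) (EGen.Xinv i))
def genY (i : Fin n) : Ueqg K A d := RingQuot.mkAlgHom (Kq K) (ERel K A d) (ι (Kq K) (EGen.Y i))
def genZ (i : Fin n) : Ueqg K A d := RingQuot.mkAlgHom (Kq K) (ERel K A d) (ι (Kq K) (EGen.Z i))

/-- `A` is a symmetrizable generalized Cartan matrix with symmetrizing positive,
relatively prime integers `d_i`, and `n ≥ 1`. -/
def IsSymmetrizableGCM {n : ℕ} (A : Matrix (Fin n) (Fin n) ℤ) (d : Fin n → ℕ) : Prop :=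
  0 < n ∧ (∀ i, A i i = 2) ∧ (∀ i j, i ≠ j → A i j ≤ 0) ∧
    (∀ i, 0 < d i) ∧ Finset.univ.gcd d = 1 ∧
    (∀ i j, (d i : ℤ) * A i j = (d j : ℤ) * A j i)

end

noncomputable section
namespace SerreAux
variable (K : Type) [Field K] (di : ℕ)

lemma qi_ne_zero : qi K di ≠ 0 :=
  pow_ne_zero _ RatFunc.X_ne_zero

lemma X_pow_ne_one (k : ℕ) (hk : 0 < k) : (RatFunc.X : RatFunc K)^k ≠ 1 := by
  intro h
  have h2 : (algebraMap (Polynomial K) (RatFunc K)) (Polynomial.X ^ k) =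
      (algebraMap (Polynomial K) (RatFunc K)) 1 := by
    simpa [map_pow, RatFunc.algebraMap_X] using h
  have h4 := congrArg Polynomial.natDegree (RatFunc.algebraMap_injective K h2)
  simp [Polynomial.natDegree_X_pow] at h4
  omega

variable (hdi : 0 < di)
include hdi

lemma qi_pow_ne_one (k : ℕ) (hk : 0 < k) : qi K di ^ k ≠ 1 := by
  rw [qi, qv, ← pow_mul]
  exact X_pow_ne_one K (di * k) (Nat.mul_pos hdi hk)

lemma qi_zpow_ne_one (z : ℤ) (hz : z ≠ 0) : qi K di ^ z ≠ 1 := by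
  rcases lt_trichotomy z 0 with h | h | h
  · intro hc
    have : qi K di ^ (-z) = 1 := by
      rw [zpow_neg, hc, inv_one]
    rw [show -z = ((-z).toNat : ℤ) by omega, zpow_natCast] at this
    exact qi_pow_ne_one K di hdi _ (by omega) this
  · exact absurd h hz
  · rw [show z = (z.toNat : ℤ) by omega, zpow_natCast]
    exact qi_pow_ne_one K di hdi _ (by omega)

lemma qi_sub_inv_ne_zero : qi K di - (qi K di)⁻¹ ≠ 0 := by
  intro h
  have hQ := qi_ne_zero K di
  have : qi K di ^ (2:ℤ) = 1 := by
    have := sub_eq_zero.mp h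
    rw [zpow_two]
    nth_rewrite 2 [this]
    field_simp
  exact qi_zpow_ne_one K di hdi 2 (by norm_num) this

lemma qi_zpow_sub_ne_zero {z w : ℤ} (hzw : z ≠ w) :
    qi K di ^ z - qi K di ^ w ≠ 0 := by
  intro h
  have hQ := qi_ne_zero K di
  have : qi K di ^ (z - w) = 1 := by
    rw [sub_eq_zero] at h
    rw [zpow_sub₀ hQ, h, div_self (zpow_ne_zero _ hQ)]
  exact qi_zpow_ne_one K di hdi _ (by omega) this

lemma qnum_ne_zero (m : ℕ) (hm : 0 < m) : qnum K di m ≠ 0 := by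
  rw [qnum]
  exact div_ne_zero (qi_zpow_sub_ne_zero K di hdi (by omega))
    (qi_sub_inv_ne_zero K di hdi)

lemma qfac_ne_zero (m : ℕ) : qfac K di m ≠ 0 := by
  induction m with
  | zero => simp [qfac]
  | succ m ih =>
    rw [qfac]
    exact mul_ne_zero (qnum_ne_zero K di hdi (m+1) (by omega)) ih

lemma qbin_zero (m : ℕ) : qbin K di m 0 = 1 := by
  rw [qbin]
  simp [qfac, div_self (qfac_ne_zero K di hdi m)]

lemma qbin_self (m : ℕ) : qbin K di m m = 1 := by
  rw [qbin]
  simp [qfac, div_self (qfac_ne_zero K di hdi m)]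

end SerreAux

namespace SerreAux
variable (K : Type) [Field K] (di : ℕ) (hdi : 0 < di)
include hdi

lemma qnum_split (a b : ℕ) :
    qnum K di ((a:ℤ) + b + 1) =
      qi K di ^ ((b:ℤ)+1) * qnum K di a + qi K di ^ (-(a:ℤ)) * qnum K di (b+1) := by
  have hQ := qi_ne_zero K di
  have hD := qi_sub_inv_ne_zero K di hdi
  rw [qnum, qnum, qnum, mul_div_assoc', mul_div_assoc', ← add_div,
    div_eq_div_iff hD hD]
  congr 1
  push_cast
  simp only [mul_sub, ← zpow_add₀ hQ]
  ring_nf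

omit hdi in
lemma qfac_succ (m : ℕ) : qfac K di (m+1) = qnum K di (m+1) * qfac K di m := rfl

lemma qbin_pascal (m r : ℕ) (hrm : r < m) :
    qbin K di (m+1) (r+1) =
      qi K di ^ ((r:ℤ)+1) * qbin K di m (r+1) + qi K di ^ ((r:ℤ) - m) * qbin K di m r := by
  have hQ := qi_ne_zero K di
  obtain ⟨a, ha⟩ : ∃ a, m = r + (a + 1) := ⟨m - r - 1, by omega⟩
  subst ha
  have key := qnum_split K di hdi (a+1) r
  rw [qbin, qbin, qbin]
  rw [show r + (a+1) + 1 - (r+1) = a + 1 by omega, show r + (a+1) - (r+1) = a by omega,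
    show r + (a+1) - r = a + 1 by omega]
  rw [qfac_succ K di (r + (a+1))]
  push_cast at key ⊢
  rw [show ((r:ℤ) + ((a:ℤ) + 1) + 1) = ((a:ℤ) + 1 + (r:ℤ) + 1) from by ring, key]
  have h1 : qfac K di (r+1) = qnum K di (r+1) * qfac K di r := rfl
  have h2 : qfac K di (a+1) = qnum K di (a+1) * qfac K di a := rfl
  have e1 : ((r:ℤ)+1) = ((r:ℕ)+1 : ℕ) := by push_cast; ring
  have e2 : ((a:ℤ)+1) = ((a:ℕ)+1 : ℕ) := by push_cast; ring
  rw [h1, h2]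
  have nfr := qfac_ne_zero K di hdi r
  have nfa := qfac_ne_zero K di hdi a
  have nfra := qfac_ne_zero K di hdi (r + (a+1))
  have nnr := qnum_ne_zero K di hdi (r+1) (by omega)
  have nna := qnum_ne_zero K di hdi (a+1) (by omega)
  push_cast at nnr nna
  have hz1 : qi K di ^ ((r:ℤ)+1) ≠ 0 := zpow_ne_zero _ hQ
  have hz2 : qi K di ^ (-((a:ℤ)+1)) ≠ 0 := zpow_ne_zero _ hQ
  rw [show ((r:ℤ) - ((r:ℤ) + ((a:ℤ)+1))) = -((a:ℤ)+1) from by ring]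
  field_simp

end SerreAux

def Eaux (K : Type) [Field K] (di : ℕ) (u : ℤ) : ℕ → ℕ → Kq K
  | 0, 0 => 1
  | 0, _+1 => 0
  | m+1, 0 => Eaux K di u m 0
  | m+1, r+1 => Eaux K di u m (r+1) + qi K di ^ (u - 2*(m:ℤ)) * Eaux K di u m r

namespace SerreAux
variable (K : Type) [Field K] (di : ℕ) (u : ℤ)

lemma Eaux_of_gt : ∀ m r : ℕ, m < r → Eaux K di u m r = 0 := by
  intro m
  induction m with
  | zero => intro r hr; match r, hr with
    | r+1, _ => rfl
  | succ m ih =>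
    intro r hr
    match r, hr with
    | r+1, hr =>
      rw [Eaux, ih _ (by omega), ih _ (by omega), mul_zero, add_zero]

variable (hdi : 0 < di)
include hdi

lemma qbin_zero_zero : qbin K di 0 0 = 1 := by simp [qbin, qfac]

lemma Eaux_closed : ∀ m r : ℕ, r ≤ m →
    Eaux K di u m r = qi K di ^ ((r:ℤ) * (u + 1 - m)) * qbin K di m r := by
  have hQ := qi_ne_zero K di
  intro m
  induction m with
  | zero =>
    intro r hr
    interval_cases r
    simp [Eaux, qbin_zero_zero K di hdi]
  | succ m ih =>
    intro r hr
    match r with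
    | 0 =>
      show Eaux K di u m 0 = _
      rw [ih 0 (by omega), qbin_zero K di hdi, qbin_zero K di hdi]
      norm_num
    | r+1 =>
      rw [Eaux]
      rcases Nat.lt_or_ge r m with h | h
      · rw [ih (r+1) (by omega), ih r (by omega), qbin_pascal K di hdi m r h]
        simp only [mul_add, ← mul_assoc, ← zpow_add₀ hQ]
        push_cast
        ring_nf
      · have hrm : r = m := by omega
        subst hrm
        rw [Eaux_of_gt K di u r (r+1) (by omega), ih r (by omega),
          qbin_self K di hdi, qbin_self K di hdi, zero_add, ← mul_assoc,
          ← zpow_add₀ hQ]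
        push_cast
        congr 2
        ring

end SerreAux

namespace SerreAux
variable (K : Type) [Field K] {n : ℕ} (A : Matrix (Fin n) (Fin n) ℤ) (d : Fin n → ℕ)
  (i j : Fin n)

lemma K_mul_Kinv : genK K A d i * genKinv K A d i = 1 := by
  simpa [genK, genKinv, map_mul] using
    RingQuot.mkAlgHom_rel (Kq K) (CRel.R1a (K := K) (A := A) (d := d) i)

lemma Kinv_mul_K : genKinv K A d i * genK K A d i = 1 := by
  simpa [genK, genKinv, map_mul] using
    RingQuot.mkAlgHom_rel (Kq K) (CRel.R1b (K := K) (A := A) (d := d) i)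

lemma R4' : genK K A d i * genF K A d j * genKinv K A d i =
    qi K (d i) ^ (-(A i j)) • genF K A d j := by
  simpa [genK, genKinv, genF, map_mul, map_smul] using
    RingQuot.mkAlgHom_rel (Kq K) (CRel.R4 (K := K) (A := A) (d := d) i j)

lemma R2' : genK K A d i * genK K A d j = genK K A d j * genK K A d i := by
  simpa [genK, map_mul] using
    RingQuot.mkAlgHom_rel (Kq K) (CRel.R2 (K := K) (A := A) (d := d) i j)

/-- `F_j K_i⁻¹ = q_i^{-A_ij} K_i⁻¹ F_j`. -/
lemma comm_FKinv : genF K A d j * genKinv K A d i =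
    qi K (d i) ^ (-(A i j)) • (genKinv K A d i * genF K A d j) := by
  have h := R4' K A d i j
  have h2 := congrArg (fun x => genKinv K A d i * x) h
  simp only [mul_smul_comm] at h2
  rw [show genKinv K A d i * (genK K A d i * genF K A d j * genKinv K A d i)
      = (genKinv K A d i * genK K A d i) * (genF K A d j * genKinv K A d i) by
        noncomm_ring, Kinv_mul_K, one_mul] at h2
  exact h2

lemma comm_ac : genKinv K A d i * genKinv K A d j = genKinv K A d j * genKinv K A d i := by
  have h1 : (genKinv K A d i * genKinv K A d j) * (genK K A d j * genK K A d i) = 1 := by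
    rw [mul_assoc, ← mul_assoc (genKinv K A d j), Kinv_mul_K, one_mul, Kinv_mul_K]
  have h2 : (genK K A d i * genK K A d j) * (genKinv K A d j * genKinv K A d i) = 1 := by
    rw [mul_assoc, ← mul_assoc (genK K A d j), K_mul_Kinv, one_mul, K_mul_Kinv]
  calc genKinv K A d i * genKinv K A d j
      = (genKinv K A d i * genKinv K A d j) *
        ((genK K A d i * genK K A d j) * (genKinv K A d j * genKinv K A d i)) := by
        rw [h2, mul_one]
    _ = (genKinv K A d i * genKinv K A d j) *
        ((genK K A d j * genK K A d i) * (genKinv K A d j * genKinv K A d i)) := by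
        rw [R2']
    _ = ((genKinv K A d i * genKinv K A d j) * (genK K A d j * genK K A d i)) *
        (genKinv K A d j * genKinv K A d i) := by noncomm_ring
    _ = genKinv K A d j * genKinv K A d i := by rw [h1, one_mul]


lemma comm_ab (hAii : A i i = 2) (hdi : 0 < d i) :
    genKinv K A d i * genF K A d i =
      qi K (d i) ^ (2:ℤ) • (genF K A d i * genKinv K A d i) := by
  have hQ := qi_ne_zero K (d i)
  have h := comm_FKinv K A d i i
  rw [hAii] at h
  rw [h, smul_smul, ← zpow_add₀ hQ]
  norm_num

lemma scalar_dj (hsym : (d i : ℤ) * A i j = (d j : ℤ) * A j i) :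
    qi K (d j) ^ (-(A j i)) = qi K (d i) ^ (-(A i j)) := by
  rw [qi, qi, qv, ← zpow_natCast RatFunc.X (d j), ← zpow_mul,
    ← zpow_natCast RatFunc.X (d i), ← zpow_mul]
  congr 1
  rw [mul_neg, mul_neg, hsym]

lemma comm_bc (hsym : (d i : ℤ) * A i j = (d j : ℤ) * A j i) :
    genF K A d i * genKinv K A d j =
      qi K (d i) ^ (-(A i j)) • (genKinv K A d j * genF K A d i) := by
  rw [comm_FKinv K A d j i, scalar_dj K A d i j hsym]

lemma comm_cb (hsym : (d i : ℤ) * A i j = (d j : ℤ) * A j i) :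
    genKinv K A d j * genF K A d i =
      qi K (d i) ^ (A i j) • (genF K A d i * genKinv K A d j) := by
  have hQ := qi_ne_zero K (d i)
  rw [comm_bc K A d i j hsym, smul_smul, ← zpow_add₀ hQ]
  simp

lemma comm_pow_ab (hAii : A i i = 2) (hdi : 0 < d i) (m : ℕ) :
    genKinv K A d i ^ m * genF K A d i =
      qi K (d i) ^ (2 * (m:ℤ)) • (genF K A d i * genKinv K A d i ^ m) := by
  have hQ := qi_ne_zero K (d i)
  induction m with
  | zero => simp
  | succ m ih =>
    rw [pow_succ', mul_assoc, ih, mul_smul_comm, ← mul_assoc,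
      comm_ab K A d i hAii hdi, smul_mul_assoc, smul_smul, ← zpow_add₀ hQ,
      mul_assoc, ← pow_succ']
    congr 2 <;> (push_cast; ring)

lemma step_B (hAii : A i i = 2) (hdi : 0 < d i)
    (hsym : (d i : ℤ) * A i j = (d j : ℤ) * A j i) (m : ℕ) :
    (genKinv K A d i + (qi K (d i) - (qi K (d i))⁻¹) • genF K A d i) *
        (genKinv K A d i ^ m * genKinv K A d j) -
      qi K (d i) ^ (-(A i j) - 2 * (m:ℤ)) •
        ((genKinv K A d i ^ m * genKinv K A d j) *
          (genKinv K A d i + (qi K (d i) - (qi K (d i))⁻¹) • genF K A d i)) =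
    (1 - qi K (d i) ^ (-(A i j) - 2 * (m:ℤ))) •
      (genKinv K A d i ^ (m+1) * genKinv K A d j) := by
  have hQ := qi_ne_zero K (d i)
  have hca := comm_ac K A d j i
  have hcb := comm_cb K A d i j hsym
  have hpab := comm_pow_ab K A d i hAii hdi m
  set a := genKinv K A d i with ha
  set b := genF K A d i with hb
  set c := genKinv K A d j with hc
  set lam := qi K (d i) - (qi K (d i))⁻¹ with hlam
  have e1 : (a + lam • b) * (a ^ m * c) = a^(m+1) * c + lam • (b * (a^m * c)) := by
    rw [add_mul, smul_mul_assoc, ← mul_assoc, ← pow_succ']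
  have e2 : (a ^ m * c) * (a + lam • b) =
      a^(m+1) * c + (lam * qi K (d i) ^ (A i j + 2 * (m:ℤ))) • (b * (a^m * c)) := by
    rw [mul_add, mul_smul_comm]
    congr 1
    · rw [mul_assoc, hca, ← mul_assoc, ← pow_succ]
    · rw [mul_assoc, hcb, mul_smul_comm, ← mul_assoc, hpab, smul_mul_assoc,
        smul_smul, smul_smul, mul_assoc lam, ← zpow_add₀ hQ, mul_assoc b]
  rw [e1, e2, smul_add, smul_smul,
    show qi K (d i) ^ (-(A i j) - 2 * (m:ℤ)) *
        (lam * qi K (d i) ^ (A i j + 2 * (m:ℤ))) = lam from by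
      rw [mul_left_comm, ← zpow_add₀ hQ,
        show (-(A i j) - 2 * (m:ℤ)) + (A i j + 2 * (m:ℤ)) = 0 from by ring,
        zpow_zero, mul_one]]
  rw [add_sub_add_right_eq_sub]
  have hfin := sub_smul (R := Kq K) (M := Uqg K A d) 1
    (qi K (d i) ^ (-(A i j) - 2 * (m:ℤ))) (a ^ (m+1) * c)
  rw [one_smul] at hfin
  exact hfin.symm


lemma Usub_smul (s t : Kq K) (x : Uqg K A d) : (s - t) • x = s • x - t • x :=
  sub_smul s t x

lemma Usmul_sub (s : Kq K) (x y : Uqg K A d) : s • (x - y) = s • x - s • y :=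
  smul_sub s x y

lemma Eaux_succ_zero (di : ℕ) (u : ℤ) (m : ℕ) :
    Eaux K di u (m+1) 0 = Eaux K di u m 0 := rfl

lemma Eaux_zero_zero (di : ℕ) (u : ℤ) : Eaux K di u 0 0 = 1 := rfl

lemma Eaux_succ_succ (di : ℕ) (u : ℤ) (m r : ℕ) :
    Eaux K di u (m+1) (r+1) =
      Eaux K di u m (r+1) + qi K di ^ (u - 2*(m:ℤ)) * Eaux K di u m r := rfl

lemma main_sum (hAii : A i i = 2) (hdi : 0 < d i)
    (hsym : (d i : ℤ) * A i j = (d j : ℤ) * A j i) (m : ℕ) :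
    ∑ r ∈ Finset.range (m+1),
      ((-1 : Kq K) ^ r * Eaux K (d i) (-(A i j)) m r) •
        ((genKinv K A d i + (qi K (d i) - (qi K (d i))⁻¹) • genF K A d i) ^ (m - r) *
          genKinv K A d j *
          (genKinv K A d i + (qi K (d i) - (qi K (d i))⁻¹) • genF K A d i) ^ r) =
    (∏ t ∈ Finset.range m, (1 - qi K (d i) ^ (-(A i j) - 2 * (t:ℤ)))) •
      (genKinv K A d i ^ m * genKinv K A d j) := by
  have hQ := qi_ne_zero K (d i)
  induction m with
  | zero =>
    rw [Finset.sum_range_one, Finset.prod_range_zero, Eaux_zero_zero, Nat.sub_self,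
      pow_zero, pow_zero, pow_zero, mul_one, mul_one, one_mul]
  | succ m ih =>
    set Q := qi K (d i) with hQdef
    set u := -(A i j) with hu
    set lam := Q - Q⁻¹ with hlam
    set a := genKinv K A d i with ha
    set b := genF K A d i with hb
    set c := genKinv K A d j with hc
    set Y := a + lam • b with hY
    set S := ∑ r ∈ Finset.range (m+1),
      ((-1 : Kq K) ^ r * Eaux K (d i) u m r) • (Y ^ (m - r) * c * Y ^ r) with hS
    -- Step 1: express the (m+1)-sum as Y * S - t_m • (S * Y)
    have h5 : Y * S = ∑ r ∈ Finset.range (m+1),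
        ((-1 : Kq K) ^ r * Eaux K (d i) u m r) • (Y ^ (m + 1 - r) * c * Y ^ r) := by
      rw [hS, Finset.mul_sum]
      refine Finset.sum_congr rfl ?_
      intro r hr
      rw [mul_smul_comm]
      congr 1
      rw [← mul_assoc, ← mul_assoc, ← pow_succ',
        show m - r + 1 = m + 1 - r from by
          have := Finset.mem_range.mp hr; omega]
    have h6 : S * Y = ∑ r ∈ Finset.range (m+1),
        ((-1 : Kq K) ^ r * Eaux K (d i) u m r) • (Y ^ (m - r) * c * Y ^ (r+1)) := by
      rw [hS, Finset.sum_mul]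
      refine Finset.sum_congr rfl ?_
      intro r hr
      rw [smul_mul_assoc, mul_assoc, ← pow_succ]
    have hstep : (∑ r ∈ Finset.range (m+1+1),
        ((-1 : Kq K) ^ r * Eaux K (d i) u (m+1) r) • (Y ^ (m + 1 - r) * c * Y ^ r))
        = Y * S - Q ^ (u - 2*(m:ℤ)) • (S * Y) := by
      rw [Finset.sum_range_succ']
      have h2 : ∀ r ∈ Finset.range (m+1),
          ((-1 : Kq K) ^ (r+1) * Eaux K (d i) u (m+1) (r+1)) •
            (Y ^ (m + 1 - (r+1)) * c * Y ^ (r+1)) =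
          ((-1 : Kq K) ^ (r+1) * Eaux K (d i) u m (r+1)) •
            (Y ^ (m - r) * c * Y ^ (r+1)) -
          (Q ^ (u - 2*(m:ℤ))) • (((-1 : Kq K) ^ r * Eaux K (d i) u m r) •
            (Y ^ (m - r) * c * Y ^ (r+1))) := by
        intro r hr
        rw [show m + 1 - (r+1) = m - r from by omega, Eaux_succ_succ, smul_smul,
          ← Usub_smul]
        congr 1
        ring
      rw [Finset.sum_congr rfl h2, Finset.sum_sub_distrib]
      rw [Finset.sum_range_succ ((fun r => ((-1 : Kq K) ^ (r+1) * Eaux K (d i) u m (r+1)) •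
            (Y ^ (m - r) * c * Y ^ (r+1)))),
        Eaux_of_gt K (d i) u m (m+1) (by omega), mul_zero, zero_smul, add_zero]
      rw [h5, h6, Finset.smul_sum, Finset.sum_range_succ'
        (fun r => ((-1 : Kq K) ^ r * Eaux K (d i) u m r) • (Y ^ (m + 1 - r) * c * Y ^ r))]
      rw [Eaux_succ_zero, sub_add_eq_add_sub]
      simp only [Nat.succ_sub_succ]
    rw [hstep, ih, Finset.prod_range_succ]
    rw [mul_smul_comm, smul_mul_assoc, smul_smul, mul_comm (Q ^ (u - 2*(m:ℤ))),
      ← smul_smul, ← Usmul_sub, step_B K A d i j hAii hdi hsym m, smul_smul]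

end SerreAux

end
/-- In `U_q(g)`, for `i ≠ j`,
`Σ_{r=0}^{1-A_ij} (-1)^r [1-A_ij choose r]_i Ŷ_i^{1-A_ij-r} K_j⁻¹ Ŷ_i^r
  = K_i^{A_ij-1} K_j⁻¹ Π_{s=0}^{-A_ij}(1 - q_i^{A_ij+2s})`
where `Ŷ_i = K_i⁻¹ + F_i(q_i - q_i⁻¹)`. -/
theorem serre_sum_middle_Kinv (K : Type) [Field K] {n : ℕ}
    (A : Matrix (Fin n) (Fin n) ℤ) (d : Fin n → ℕ) (hA : IsSymmetrizableGCM A d)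
    (i j : Fin n) (hij : i ≠ j) :
    ∑ r ∈ Finset.range ((1 - A i j).toNat + 1),
      ((-1 : Kq K) ^ r * qbin K (d i) (1 - A i j).toNat r) •
        ((genKinv K A d i + (qi K (d i) - (qi K (d i))⁻¹) • genF K A d i) ^
            ((1 - A i j).toNat - r) *
          genKinv K A d j *
          (genKinv K A d i + (qi K (d i) - (qi K (d i))⁻¹) • genF K A d i) ^ r) =
    (∏ s ∈ Finset.range ((-(A i j)).toNat + 1), (1 - qi K (d i) ^ (A i j + 2 * (s : ℤ)))) •
      (genKinv K A d i ^ (1 - A i j).toNat * genKinv K A d j) := by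
  obtain ⟨hn, hdiag, hoff, hdpos, hgcd, hsymm⟩ := hA
  have hAij := hoff i j hij
  have hdi := hdpos i
  set N := (1 - A i j).toNat with hN
  have hNz : (N : ℤ) = 1 - A i j := Int.toNat_of_nonneg (by omega)
  have hmain := SerreAux.main_sum K A d i j (hdiag i) hdi (hsymm i j) N
  have hcoef : ∀ r ∈ Finset.range (N+1),
      ((-1 : Kq K) ^ r * qbin K (d i) N r) •
        ((genKinv K A d i + (qi K (d i) - (qi K (d i))⁻¹) • genF K A d i) ^ (N - r) *
          genKinv K A d j *
          (genKinv K A d i + (qi K (d i) - (qi K (d i))⁻¹) • genF K A d i) ^ r) =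
      ((-1 : Kq K) ^ r * Eaux K (d i) (-(A i j)) N r) •
        ((genKinv K A d i + (qi K (d i) - (qi K (d i))⁻¹) • genF K A d i) ^ (N - r) *
          genKinv K A d j *
          (genKinv K A d i + (qi K (d i) - (qi K (d i))⁻¹) • genF K A d i) ^ r) := by
    intro r hr
    rw [SerreAux.Eaux_closed K (d i) (-(A i j)) hdi N r
      (Nat.lt_succ_iff.mp (Finset.mem_range.mp hr)),
      show (-(A i j) + 1 - (N:ℤ)) = 0 from by omega, mul_zero, zpow_zero, one_mul]
  rw [Finset.sum_congr rfl hcoef, hmain]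
  congr 1
  rw [show (-(A i j)).toNat + 1 = N from by omega]
  conv_rhs => rw [← Finset.prod_range_reflect]
  refine Finset.prod_congr rfl fun t ht => ?_
  have htN := Finset.mem_range.mp ht
  congr 1
  rw [show ((N - 1 - t : ℕ) : ℤ) = (N:ℤ) - 1 - t from by omega]
  congr 1
  omega
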